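/- Fix a nonnegative integer n. As x → +∞, each eigenvalue of Z(x) = K(I − e^{−2xK}N)(I + e^{−2xK}N)^{−1} tends to a member of {1,2,…,n}, and as x → −∞ each tends to a member of {−1,−2,…,−n}; more precisely, Z(x) → K as x → +∞ and Z(x) → −K' where the spectrum tends to {−1,…,−n} as x → −∞, so the zeros z_1(x),…,z_n(x) of Γ(1−z)P_n^z(tanh x) move from {−1,…,−n} to {1,…,n} as x runs over ℝ. -/

import Mathlib

open Finset Polynomial Matrix Filter

private lemma contProdCoeff {ι X : Type*} [TopologicalSpace X] (s : Finset ι)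
    (f : ι → X → Polynomial ℝ) (h : ∀ i, ∀ m : ℕ, Continuous fun x => (f i x).coeff m) :
    ∀ m : ℕ, Continuous fun x => (∏ i ∈ s, f i x).coeff m := by
  classical
  induction s using Finset.induction_on with
  | empty => intro m; simp only [Finset.prod_empty]; exact continuous_const
  | insert _ _ ha ih =>
    intro m
    simp only [Finset.prod_insert ha, Polynomial.coeff_mul]
    exact continuous_finset_sum _ fun p _ => (h _ _).mul (ih _)

private lemma contCharpolyCoeff (n m : ℕ) :
    Continuous fun M : Matrix (Fin n) (Fin n) ℝ => M.charpoly.coeff m := by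
  classical
  have hent : ∀ (i j : Fin n) (m : ℕ),
      Continuous fun M : Matrix (Fin n) (Fin n) ℝ => (charmatrix M i j).coeff m := by
    intro i j m
    rcases eq_or_ne i j with rfl | hij
    · simp only [charmatrix_apply_eq, Polynomial.coeff_sub, Polynomial.coeff_X,
        Polynomial.coeff_C]
      rcases m with _ | _ | m <;> simp <;> fun_prop
    · simp only [charmatrix_apply_ne _ _ _ hij, Polynomial.coeff_neg, Polynomial.coeff_C]
      rcases m with _ | m <;> simp <;> fun_prop
  have key : ∀ M : Matrix (Fin n) (Fin n) ℝ, M.charpoly.coeff m =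
      ∑ σ : Equiv.Perm (Fin n), (Equiv.Perm.sign σ : ℤ) •
        ((∏ i, charmatrix M (σ i) i).coeff m) := by
    intro M
    rw [Matrix.charpoly, Matrix.det_apply, Polynomial.finset_sum_coeff]
    exact Finset.sum_congr rfl fun σ _ => by rw [Polynomial.coeff_smul, Units.smul_def]
  simp only [key]
  exact continuous_finset_sum _ fun σ _ =>
    by have := (contProdCoeff Finset.univ (fun i M => charmatrix M (σ i) i) (fun i m => hent _ _ m) m).const_smul ((Equiv.Perm.sign σ : ℤ)); exact this

private lemma charpolyConj {n : ℕ} (P M : Matrix (Fin n) (Fin n) ℝ) (h : IsUnit P.det) :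
    (P * M * P⁻¹).charpoly = M.charpoly := by
  have hPP : P * P⁻¹ = 1 := Matrix.mul_nonsing_inv P h
  set C' : Matrix (Fin n) (Fin n) ℝ →+* Matrix (Fin n) (Fin n) (Polynomial ℝ) :=
    (Polynomial.C : ℝ →+* Polynomial ℝ).mapMatrix with hC'
  have hmap : C' P * C' P⁻¹ = 1 := by rw [← _root_.map_mul, hPP, _root_.map_one]
  have hcomm : C' P * Matrix.scalar (Fin n) (X : Polynomial ℝ) =
      Matrix.scalar (Fin n) (X : Polynomial ℝ) * C' P :=
    ((Matrix.scalar_commute (X : Polynomial ℝ) (fun r => Commute.all _ _) (C' P))).symm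
  have key : charmatrix (P * M * P⁻¹) = C' P * charmatrix M * C' P⁻¹ := by
    show Matrix.scalar (Fin n) (X : Polynomial ℝ) - C' (P * M * P⁻¹) =
      C' P * (Matrix.scalar (Fin n) (X : Polynomial ℝ) - C' M) * C' P⁻¹
    rw [Matrix.mul_sub, Matrix.sub_mul]
    congr 1
    · rw [Matrix.mul_assoc, ← Matrix.mul_assoc (C' P), hcomm, Matrix.mul_assoc,
        hmap, Matrix.mul_one]
    · rw [_root_.map_mul, _root_.map_mul]
  rw [Matrix.charpoly, key, Matrix.det_mul, Matrix.det_mul, Matrix.charpoly]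
  have h2 : (C' P).det * (C' P⁻¹).det = 1 := by
    rw [← Matrix.det_mul, hmap, Matrix.det_one]
  calc (C' P).det * (charmatrix M).det * (C' P⁻¹).det
      = ((C' P).det * (C' P⁻¹).det) * (charmatrix M).det := by ring
    _ = (charmatrix M).det := by rw [h2, one_mul]


private lemma charpolyDiagonal {n : ℕ} (d : Fin n → ℝ) :
    (Matrix.diagonal d).charpoly = ∏ i, (X - C (d i)) := by
  rw [Matrix.charpoly_of_upperTriangular _ (Matrix.blockTriangular_diagonal d)]
  simp

private lemma prodIcc {M : Type*} [CommMonoid M] (g : ℕ → M) :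
    ∀ n : ℕ, ∏ j ∈ Finset.Icc 1 n, g j = ∏ i ∈ Finset.range n, g (i + 1)
  | 0 => by simp
  | n + 1 => by
    rw [Finset.prod_Icc_succ_top (by omega), Finset.prod_range_succ, prodIcc g n]

private lemma prodIcc' {M : Type*} [CommMonoid M] (g : ℕ → M) (n : ℕ) :
    ∏ j ∈ Finset.Icc 1 n, g j = ∏ i : Fin n, g ((i : ℕ) + 1) := by
  rw [prodIcc g n, ← Fin.prod_univ_eq_prod_range (fun i => g (i + 1)) n]

private lemma sumDivEqZero {n : ℕ} (v : Fin n → ℝ)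
    (h : ∀ j : Fin n, ∑ k, v k / ((((j:ℕ):ℝ) + 1) + (((k:ℕ):ℝ) + 1)) = 0) : v = 0 := by
  classical
  by_contra hv
  obtain ⟨k₀, hk₀⟩ : ∃ k, v k ≠ 0 := by
    by_contra h'; push_neg at h'; exact hv (funext h')
  set a : Fin n → ℝ := fun i => ((i:ℕ):ℝ) + 1 with ha
  have ha_inj : Function.Injective a := by
    intro i j hij
    have : ((i:ℕ):ℝ) = ((j:ℕ):ℝ) := by
      have := hij; simp only [ha] at this; linarith
    exact Fin.ext (Nat.cast_injective this)
  have hapos : ∀ i : Fin n, (0:ℝ) < a i := fun i => by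
    simp only [ha]; positivity
  have hpos : ∀ i j : Fin n, (0:ℝ) < a i + a j := fun i j =>
    add_pos (hapos i) (hapos j)
  set p : Polynomial ℝ :=
    ∑ k, Polynomial.C (v k) * ∏ l ∈ Finset.univ.erase k, (Polynomial.X + Polynomial.C (a l))
    with hp
  have hn : 0 < n := k₀.pos
  have hdeg : p.natDegree < n := by
    refine lt_of_le_of_lt
      (Polynomial.natDegree_sum_le_of_forall_le _ _ fun k _ => ?_) (Nat.sub_lt hn one_pos)
    refine le_trans (Polynomial.natDegree_mul_le) ?_
    rw [Polynomial.natDegree_C, zero_add]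
    refine le_trans (Polynomial.natDegree_prod_le _ _) (le_of_eq ?_)
    calc ∑ l ∈ Finset.univ.erase k, (Polynomial.X + Polynomial.C (a l)).natDegree
        = ∑ l ∈ Finset.univ.erase k, 1 :=
          Finset.sum_congr rfl fun l _ => Polynomial.natDegree_X_add_C _
      _ = n - 1 := by
          rw [Finset.sum_const, smul_eq_mul, mul_one,
            Finset.card_erase_of_mem (Finset.mem_univ k), Finset.card_univ, Fintype.card_fin]
  have heval : ∀ j : Fin n, p.eval (a j) = 0 := by
    intro j
    have hP : ∀ k : Fin n, (∏ l ∈ Finset.univ.erase k, (a j + a l)) =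
        (∏ l, (a j + a l)) / (a j + a k) := by
      intro k
      rw [eq_div_iff (ne_of_gt (hpos j k)), mul_comm]
      exact Finset.mul_prod_erase Finset.univ (fun l => a j + a l) (Finset.mem_univ k)
    have hkey : p.eval (a j) = (∏ l, (a j + a l)) * ∑ k, v k / (a j + a k) := by
      simp only [hp, Polynomial.eval_finset_sum, Polynomial.eval_mul, Polynomial.eval_C,
        Polynomial.eval_prod, Polynomial.eval_add, Polynomial.eval_X, Finset.mul_sum]
      refine Finset.sum_congr rfl fun k _ => ?_
      rw [hP k]
      have := ne_of_gt (hpos j k)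
      field_simp
    rw [hkey, h j, mul_zero]
  have hp0 : p = 0 :=
    Polynomial.eq_zero_of_natDegree_lt_card_of_eval_eq_zero p ha_inj heval
      (by simpa using hdeg)
  have heval2 := congrArg (Polynomial.eval (-(a k₀))) hp0
  simp only [hp, Polynomial.eval_finset_sum, Polynomial.eval_mul, Polynomial.eval_C,
    Polynomial.eval_prod, Polynomial.eval_add, Polynomial.eval_X, Polynomial.eval_zero] at heval2
  rw [Finset.sum_eq_single k₀ (fun k _ hk => ?_) (by simp)] at heval2
  · rcases mul_eq_zero.mp heval2 with h' | h'
    · exact hk₀ h'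
    · refine absurd h' (Finset.prod_ne_zero_iff.mpr fun l hl => ?_)
      have hlk : l ≠ k₀ := Finset.ne_of_mem_erase hl
      intro hc
      exact hlk (ha_inj (by linarith))
  · refine mul_eq_zero_of_right _ (Finset.prod_eq_zero
      (Finset.mem_erase.mpr ⟨Ne.symm hk, Finset.mem_univ k₀⟩) (by ring))

private lemma detNneZero (n : ℕ) :
    (Matrix.of fun j k : Fin n =>
      (Nat.choose (2 * ((j : ℕ) + 1)) ((j : ℕ) + 1) : ℝ) *
        (Nat.choose (n + ((j : ℕ) + 1)) (n - ((j : ℕ) + 1)) : ℝ) *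
        ((((j : ℕ) : ℝ) + 1) / ((((j : ℕ) : ℝ) + 1) + (((k : ℕ) : ℝ) + 1)))).det ≠ 0 := by
  classical
  intro hdet
  obtain ⟨v, hv, hMv⟩ := Matrix.exists_mulVec_eq_zero_iff.mpr hdet
  refine hv (sumDivEqZero v fun j => ?_)
  have hj := congrFun hMv j
  simp only [Matrix.mulVec, dotProduct, Matrix.of_apply, Pi.zero_apply] at hj
  set b : ℝ := (Nat.choose (2 * ((j : ℕ) + 1)) ((j : ℕ) + 1) : ℝ) *
    (Nat.choose (n + ((j : ℕ) + 1)) (n - ((j : ℕ) + 1)) : ℝ) with hb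
  have hbpos : 0 < b := by
    have h1 : 0 < Nat.choose (2 * ((j:ℕ) + 1)) ((j:ℕ) + 1) := Nat.choose_pos (by omega)
    have h2 : 0 < Nat.choose (n + ((j:ℕ) + 1)) (n - ((j:ℕ) + 1)) := Nat.choose_pos (by omega)
    have := Nat.cast_pos (α := ℝ) |>.mpr h1
    have := Nat.cast_pos (α := ℝ) |>.mpr h2
    rw [hb]; positivity
  have hfac : (b * (((j:ℕ):ℝ) + 1)) *
      (∑ k, v k / ((((j:ℕ):ℝ) + 1) + (((k:ℕ):ℝ) + 1))) = 0 := by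
    rw [Finset.mul_sum, ← hj]
    refine Finset.sum_congr rfl fun k _ => ?_
    have : ((((j:ℕ):ℝ) + 1) + (((k:ℕ):ℝ) + 1)) ≠ 0 := by positivity
    field_simp
  have hne : (b * (((j:ℕ):ℝ) + 1)) ≠ 0 := by positivity
  exact (mul_eq_zero.mp hfac).resolve_left hne


private lemma tendstoInvAux {n : ℕ} {l : Filter ℝ} {A : ℝ → Matrix (Fin n) (Fin n) ℝ}
    {A₀ : Matrix (Fin n) (Fin n) ℝ} (hA : Tendsto A l (nhds A₀)) (h : A₀.det ≠ 0) :
    Tendsto (fun x => (A x)⁻¹) l (nhds A₀⁻¹) := by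
  have hc : ContinuousAt Inv.inv A₀ := by
    apply continuousAt_matrix_inv
    rw [Ring.inverse_eq_inv']
    exact continuousAt_inv₀ h
  exact hc.tendsto.comp hA

private lemma tendstoDiag {n : ℕ} {l : Filter ℝ} {d : ℝ → Fin n → ℝ}
    (h : ∀ i, Tendsto (fun x => d x i) l (nhds 0)) :
    Tendsto (fun x => Matrix.diagonal (d x)) l (nhds 0) := by
  have hc : Continuous fun v : Fin n → ℝ => Matrix.diagonal v := continuous_id.matrix_diagonal
  have h2 := (hc.tendsto 0).comp (tendsto_pi_nhds.mpr (fun i => h i))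
  have h0 : Matrix.diagonal (0 : Fin n → ℝ) = 0 := Matrix.diagonal_zero
  rw [h0] at h2
  exact h2

private lemma expLim1 (c : ℝ) (hc : 0 < c) :
    Tendsto (fun x : ℝ => Real.exp (-2 * x * c)) atTop (nhds 0) := by
  apply Real.tendsto_exp_atBot.comp
  have h1 : Tendsto (fun x : ℝ => x * (2 * c)) atTop atTop :=
    Tendsto.atTop_mul_const (by positivity) tendsto_id
  have h2 : Tendsto (fun x : ℝ => -(x * (2 * c))) atTop atBot := tendsto_neg_atBot_iff.mpr h1
  convert h2 using 2 with x
  ring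

private lemma expLim2 (c : ℝ) (hc : 0 < c) :
    Tendsto (fun x : ℝ => Real.exp (2 * x * c)) atBot (nhds 0) := by
  apply Real.tendsto_exp_atBot.comp
  have h1 : Tendsto (fun x : ℝ => x * (2 * c)) atBot atBot :=
    Tendsto.atBot_mul_const (by positivity) tendsto_id
  convert h1 using 2 with x
  ring
/-- with `K = diag(1,…,n)`, `N_{jk} = binom(2j,j)binom(n+j,n−j)·j/(j+k)` and
`Z(x) = K(I − e^{−2xK}N)(I + e^{−2xK}N)^{−1}`, one has `Z(x) → K` as `x → +∞` (so the
eigenvalues tend to `{1,…,n}`), while as `x → −∞` the characteristic polynomial of `Z(x)`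
tends (coefficientwise) to `∏_{j=1}^n (z + j)`, so the eigenvalues of `Z(x)`, i.e. the
zeros of `Γ(1−z)P_n^z(tanh x)`, move from `{−1,…,−n}` to `{1,…,n}` as `x` runs over `ℝ`. -/
theorem stmt12 (n : ℕ)
    (K N : Matrix (Fin n) (Fin n) ℝ)
    (hK : K = Matrix.diagonal fun i : Fin n => ((i : ℕ) : ℝ) + 1)
    (hN : N = Matrix.of fun j k : Fin n =>
      (Nat.choose (2 * ((j : ℕ) + 1)) ((j : ℕ) + 1) : ℝ) *
        (Nat.choose (n + ((j : ℕ) + 1)) (n - ((j : ℕ) + 1)) : ℝ) *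
        ((((j : ℕ) : ℝ) + 1) / ((((j : ℕ) : ℝ) + 1) + (((k : ℕ) : ℝ) + 1))))
    (Z : ℝ → Matrix (Fin n) (Fin n) ℝ)
    (hZ : ∀ x : ℝ, Z x =
      K * (1 - (Matrix.diagonal fun i : Fin n => Real.exp (-2 * x * (((i : ℕ) : ℝ) + 1))) * N)
        * (1 + (Matrix.diagonal fun i : Fin n =>
            Real.exp (-2 * x * (((i : ℕ) : ℝ) + 1))) * N)⁻¹) :
    Tendsto Z atTop (nhds K) ∧
    (∀ m : ℕ, Tendsto (fun x => ((Z x).charpoly).coeff m) atTop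
      (nhds ((∏ j ∈ Finset.Icc 1 n, (Polynomial.X - Polynomial.C (j : ℝ))).coeff m))) ∧
    (∀ m : ℕ, Tendsto (fun x => ((Z x).charpoly).coeff m) atBot
      (nhds ((∏ j ∈ Finset.Icc 1 n, (Polynomial.X + Polynomial.C (j : ℝ))).coeff m))) := by
  classical
  have hdetN : N.det ≠ 0 := by rw [hN]; exact detNneZero n
  set d : ℝ → Fin n → ℝ := fun x i => Real.exp (-2 * x * (((i : ℕ) : ℝ) + 1)) with hd
  set e : ℝ → Fin n → ℝ := fun x i => Real.exp (2 * x * (((i : ℕ) : ℝ) + 1)) with he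
  have hcpos : ∀ i : Fin n, (0:ℝ) < ((i : ℕ) : ℝ) + 1 := fun i => by positivity
  have hZ' : ∀ x, Z x = K * (1 - Matrix.diagonal (d x) * N)
      * (1 + Matrix.diagonal (d x) * N)⁻¹ := hZ
  have hDtop : Tendsto (fun x => Matrix.diagonal (d x)) atTop (nhds 0) :=
    tendstoDiag fun i => expLim1 _ (hcpos i)
  have hEbot : Tendsto (fun x => Matrix.diagonal (e x)) atBot (nhds 0) :=
    tendstoDiag fun i => expLim2 _ (hcpos i)
  have hKc : K.charpoly = ∏ j ∈ Finset.Icc 1 n, (X - C (j : ℝ)) := by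
    rw [hK, charpolyDiagonal, prodIcc' (fun j => (X : Polynomial ℝ) - C (j : ℝ)) n]
    refine Finset.prod_congr rfl fun i _ => ?_
    push_cast
    ring_nf
  have hKc' : (-K).charpoly = ∏ j ∈ Finset.Icc 1 n, (X + C (j : ℝ)) := by
    have hneg : -K = Matrix.diagonal fun i : Fin n => -(((i : ℕ) : ℝ) + 1) := by
      rw [hK, Matrix.diagonal_neg]
    rw [hneg, charpolyDiagonal, prodIcc' (fun j => (X : Polynomial ℝ) + C (j : ℝ)) n]
    refine Finset.prod_congr rfl fun i _ => ?_
    rw [map_neg, sub_neg_eq_add]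
    push_cast
    ring_nf
  have hpart1 : Tendsto Z atTop (nhds K) := by
    have h1 : Tendsto (fun x => (1 : Matrix (Fin n) (Fin n) ℝ) + Matrix.diagonal (d x) * N)
        atTop (nhds (1 + 0 * N)) :=
      tendsto_const_nhds.add (hDtop.mul tendsto_const_nhds)
    rw [show (1 + (0 : Matrix (Fin n) (Fin n) ℝ) * N) = 1 by simp] at h1
    have h2 : Tendsto (fun x => ((1 : Matrix (Fin n) (Fin n) ℝ) + Matrix.diagonal (d x) * N)⁻¹)
        atTop (nhds (1 : Matrix (Fin n) (Fin n) ℝ)⁻¹) :=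
      tendstoInvAux h1 (by simp)
    rw [show (1 : Matrix (Fin n) (Fin n) ℝ)⁻¹ = 1 from Matrix.inv_eq_left_inv (by simp)] at h2
    have h3 : Tendsto (fun x => K * (1 - Matrix.diagonal (d x) * N) *
        (1 + Matrix.diagonal (d x) * N)⁻¹) atTop (nhds (K * (1 - 0 * N) * 1)) :=
      (tendsto_const_nhds.mul (tendsto_const_nhds.sub (hDtop.mul tendsto_const_nhds))).mul h2
    rw [show (K * (1 - (0 : Matrix (Fin n) (Fin n) ℝ) * N) * 1) = K by simp] at h3
    have hZfun : Z = fun x => K * (1 - Matrix.diagonal (d x) * N)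
        * (1 + Matrix.diagonal (d x) * N)⁻¹ := funext hZ'
    rw [hZfun]
    exact h3
  refine ⟨hpart1, fun m => ?_, fun m => ?_⟩
  · have h4 := ((contCharpolyCoeff n m).tendsto K).comp hpart1
    rw [← hKc]
    exact h4
  · -- atBot part
    have hsim : ∀ x, (Z x).charpoly =
        (K * (Matrix.diagonal (e x) - N) * (Matrix.diagonal (e x) + N)⁻¹).charpoly := by
      intro x
      set P := Matrix.diagonal (d x) with hP
      set E := Matrix.diagonal (e x) with hE
      have hPE : P * E = 1 := by
        rw [hP, hE, Matrix.diagonal_mul_diagonal]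
        have : (fun i : Fin n => d x i * e x i) = fun _ => (1:ℝ) := by
          funext i
          rw [hd, he]
          show Real.exp (-2 * x * (((i : ℕ) : ℝ) + 1)) * Real.exp (2 * x * (((i : ℕ) : ℝ) + 1)) = 1
          rw [← Real.exp_add, show -2 * x * (((i : ℕ) : ℝ) + 1) + 2 * x * (((i : ℕ) : ℝ) + 1)
            = 0 by ring, Real.exp_zero]
        rw [this, Matrix.diagonal_one]
      have hdetP : IsUnit P.det := by
        rw [hP, Matrix.det_diagonal]
        exact (Finset.prod_ne_zero_iff.mpr fun i _ => (Real.exp_pos _).ne').isUnit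
      have hKP : K * P = P * K := by
        rw [hK, hP, Matrix.diagonal_mul_diagonal, Matrix.diagonal_mul_diagonal]
        exact congrArg _ (funext fun i => mul_comm _ _)
      have hZx : Z x = P * (K * (E - N) * (E + N)⁻¹) * P⁻¹ := by
        rw [hZ' x]
        have h1 : (1 : Matrix (Fin n) (Fin n) ℝ) - P * N = P * (E - N) := by
          rw [Matrix.mul_sub, hPE]
        have h2 : (1 : Matrix (Fin n) (Fin n) ℝ) + P * N = P * (E + N) := by
          rw [Matrix.mul_add, hPE]
        rw [h1, h2, Matrix.mul_inv_rev]
        rw [show K * (P * (E - N)) = P * K * (E - N) by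
          rw [← Matrix.mul_assoc, hKP]]
        simp only [Matrix.mul_assoc]
      rw [hZx, charpolyConj _ _ hdetP]
    have hinv : Tendsto (fun x => (Matrix.diagonal (e x) + N)⁻¹) atBot
        (nhds ((0 + N)⁻¹)) :=
      tendstoInvAux (hEbot.add tendsto_const_nhds) (by simpa using hdetN)
    have hW : Tendsto (fun x => K * (Matrix.diagonal (e x) - N) * (Matrix.diagonal (e x) + N)⁻¹)
        atBot (nhds (K * (0 - N) * (0 + N)⁻¹)) :=
      (tendsto_const_nhds.mul (hEbot.sub tendsto_const_nhds)).mul hinv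
    have hval : K * ((0 : Matrix (Fin n) (Fin n) ℝ) - N) *
        ((0 : Matrix (Fin n) (Fin n) ℝ) + N)⁻¹ = -K := by
      rw [zero_sub, zero_add, mul_neg, neg_mul, Matrix.mul_assoc,
        Matrix.mul_nonsing_inv N (isUnit_iff_ne_zero.mpr hdetN), mul_one]
    rw [hval] at hW
    have h5 := ((contCharpolyCoeff n m).tendsto (-K)).comp hW
    rw [← hKc']
    have hfun : (fun x => ((Z x).charpoly).coeff m) =
        fun x => ((K * (Matrix.diagonal (e x) - N) * (Matrix.diagonal (e x) + N)⁻¹).charpoly).coeff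
          m := funext fun x => by rw [hsim x]
    rw [hfun]
    exact h5
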